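/- For a skew-symmetric 3×3 matrix [r]_× with coefficient vector r ∈ ℝ³ and ζ = ‖r‖, the matrix Exp([r]_×) = I + (sin ζ / ζ)[r]_× + ((1 - cos ζ)/ζ²)[r]_ײ is a rotation matrix: it is orthogonal with determinant 1. -/

import Mathlib

open Matrix

def skew (r : Fin 3 → ℝ) : Matrix (Fin 3) (Fin 3) ℝ :=
  !![0, -r 2, r 1; r 2, 0, -r 0; -r 1, r 0, 0]

set_option maxHeartbeats 1000000 in
lemma stmt_16_orth (r : Fin 3 → ℝ) (ζ : ℝ) (h2 : ζ ^ 2 = r 0 ^ 2 + r 1 ^ 2 + r 2 ^ 2)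
    (hζ0 : ζ ≠ 0) :
    (1 + (Real.sin ζ / ζ) • skew r + ((1 - Real.cos ζ) / ζ ^ 2) • (skew r * skew r))ᵀ *
    (1 + (Real.sin ζ / ζ) • skew r + ((1 - Real.cos ζ) / ζ ^ 2) • (skew r * skew r)) = 1 := by
  have hs := Real.sin_sq_add_cos_sq ζ
  set K := skew r with hK
  have hT : Kᵀ = -K := by
    ext i j; fin_cases i <;> fin_cases j <;> simp [hK, skew]
  have hK3 : K * K * K = (-(ζ ^ 2)) • K := by
    ext i j; fin_cases i <;> fin_cases j <;>
      simp [hK, skew, Matrix.mul_apply, Fin.sum_univ_three] <;> (try rw [h2]) <;> ring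
  have hK3' : K * (K * K) = (-(ζ ^ 2)) • K := by rw [← mul_assoc]; exact hK3
  have hK4 : (K * K) * (K * K) = (-(ζ ^ 2)) • (K * K) := by
    rw [← mul_assoc, hK3, smul_mul_assoc]
  have hRT : (1 + (Real.sin ζ / ζ) • K + ((1 - Real.cos ζ) / ζ ^ 2) • (K * K))ᵀ
      = 1 + (-(Real.sin ζ / ζ)) • K + ((1 - Real.cos ζ) / ζ ^ 2) • (K * K) := by
    simp [transpose_add, transpose_smul, transpose_mul, hT, neg_smul]
  rw [hRT]
  simp only [mul_add, add_mul, one_mul, mul_one, smul_mul_assoc, mul_smul_comm, smul_smul,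
    hK3', hK3, hK4]
  match_scalars <;> field_simp <;> ring_nf
  linear_combination (-1) * hs

set_option maxHeartbeats 1000000 in
lemma stmt_16_det (r : Fin 3 → ℝ) (ζ : ℝ) (h2 : ζ ^ 2 = r 0 ^ 2 + r 1 ^ 2 + r 2 ^ 2)
    (hζ0 : ζ ≠ 0) :
    (1 + (Real.sin ζ / ζ) • skew r + ((1 - Real.cos ζ) / ζ ^ 2) • (skew r * skew r)).det = 1 := by
  have hs := Real.sin_sq_add_cos_sq ζ
  rw [Matrix.det_fin_three]
  simp [Matrix.add_apply, Matrix.smul_apply, Matrix.one_fin_three, Matrix.mul_apply,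
    Fin.sum_univ_three, skew]
  field_simp
  ring_nf
  linear_combination
    (-(ζ ^ 2) * (1 - Real.cos ζ) ^ 2 * (r 0 ^ 2 + r 1 ^ 2 + r 2 ^ 2 + ζ ^ 2)
      - ζ ^ 4 * (2 * Real.cos ζ - 2 + Real.sin ζ ^ 2)) * h2 + ζ ^ 6 * hs

theorem stmt_16 (r : Fin 3 → ℝ) (ζ : ℝ) (hζ : ζ = Real.sqrt (∑ i, (r i) ^ 2))
    (hpos : 0 < ζ) :
    letI R : Matrix (Fin 3) (Fin 3) ℝ :=
      1 + (Real.sin ζ / ζ) • skew r + ((1 - Real.cos ζ) / ζ ^ 2) • (skew r * skew r)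
    Rᵀ * R = 1 ∧ R.det = 1 := by
  have hζ0 : ζ ≠ 0 := ne_of_gt hpos
  have h2 : ζ ^ 2 = r 0 ^ 2 + r 1 ^ 2 + r 2 ^ 2 := by
    rw [hζ, Real.sq_sqrt (by positivity)]
    simp [Fin.sum_univ_three]
  exact ⟨stmt_16_orth r ζ h2 hζ0, stmt_16_det r ζ h2 hζ0⟩
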